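/- arXiv:math/0509187 — 8 statements merged into one kernel-verified Lean document; each statement's English description precedes it below -/
import Mathlib

section
/- Both roots ε of the polynomial ε² − ε − 1 give a common zero of the twelve generators of the Turaev–Viro ideal of type (2,1): setting a = ε^{-1/2} is not needed if one instead checks that the substitution ⟨112|122⟩ = a with a² = ε^{-1}, ⟨212|212⟩ = ε^{-1}, ⟨212|222⟩ = ε^{-1}, ⟨222|222⟩ = −ε^{-2}, w(2) = ε satisfies each of the twelve listed polynomial relations; concretely, with x = ⟨112|122⟩, y = ⟨212|212⟩, z = ⟨212|222⟩, t = ⟨222|222⟩, w = w(2), the assignment y = z = ε^{-1}, t = −ε^{-2}, w = ε, x² = ε^{-1} makes the following polynomials vanish: t² − z³ − w·t³; z² − z²·y − w·t²·z; z·y − w·z³; y·x − w·y²·x; z·x − w·z²·x; y² − y·x²; x² − y³ − w·z³; x − w·x³; −z·y² − w·t·z²; t·z − w·t·z²; z² − z·x²; z² − w·z²·y. -/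
/-- The ε-invariant evaluation satisfies all twelve generators of the
Turaev--Viro ideal of type (2,1): if `ε² = ε + 1`, `x² = ε⁻¹`,
`y = z = ε⁻¹`, `t = −ε⁻²`, `w = ε`, the twelve polynomials vanish. -/
theorem epsilon_solution_of_tv_relations {k : Type*} [Field k]
    (ε x y z t w : k) (hε0 : ε ≠ 0) (hε : ε^2 = ε + 1)
    (hx : x^2 = ε⁻¹) (hy : y = ε⁻¹) (hz : z = ε⁻¹)
    (ht : t = -((ε^2)⁻¹)) (hw : w = ε) :
    t^2 - z^3 - w*t^3 = 0 ∧
    z^2 - z^2*y - w*t^2*z = 0 ∧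
    z*y - w*z^3 = 0 ∧
    y*x - w*y^2*x = 0 ∧
    z*x - w*z^2*x = 0 ∧
    y^2 - y*x^2 = 0 ∧
    x^2 - y^3 - w*z^3 = 0 ∧
    x - w*x^3 = 0 ∧
    -(z*y^2) - w*t*z^2 = 0 ∧
    t*z - w*t*z^2 = 0 ∧
    z^2 - z*x^2 = 0 ∧
    z^2 - w*z^2*y = 0 := by
  have hinv : ε⁻¹ = ε - 1 := by
    field_simp
    linear_combination -hε
  have hinv2 : (ε^2)⁻¹ = 2 - ε := by
    have h2 : ε^2 ≠ 0 := pow_ne_zero 2 hε0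
    field_simp
    linear_combination (ε - 1) * hε
  rw [hinv] at hx
  rw [hy, hz, ht, hw, hinv, hinv2]
  refine ⟨?_, ?_, ?_, ?_, ?_, ?_, ?_, ?_, ?_, ?_, ?_, ?_⟩
  · linear_combination (-ε^2 + 4*ε - 5) * hε
  · linear_combination (-ε^2 + 3*ε - 2) * hε
  · linear_combination (-ε^2 + 2*ε - 1) * hε
  · linear_combination ((1 - ε)*x) * hε
  · linear_combination ((1 - ε)*x) * hε
  · linear_combination (1 - ε) * hx
  · linear_combination hx + (-ε^2 + ε) * hε
  · linear_combination (-ε*x) * hx + (-x) * hε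
  · linear_combination (-ε^2 + 2*ε - 1) * hε
  · linear_combination (-ε^2 + 3*ε - 2) * hε
  · linear_combination (1 - ε) * hx
  · linear_combination (-ε^2 + 2*ε - 1) * hε
end

section
/- In the polynomial ring ℚ[x, y, z, t, w], the polynomial x² − y lies in the radical of the ideal I generated by the twelve Turaev–Viro relations: t² − z³ − w·t³; z² − z²·y − w·t²·z; z·y − w·z³; y·x − w·y²·x; z·x − w·z²·x; y² − y·x²; x² − y³ − w·z³; x − w·x³; −z·y² − w·t·z²; t·z − w·t·z²; z² − z·x²; z² − w·z²·y. -/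
open MvPolynomial

/-- `x = ⟨112|122⟩` -/
noncomputable def x : MvPolynomial (Fin 5) ℚ := X 0
/-- `y = ⟨212|212⟩` -/
noncomputable def y : MvPolynomial (Fin 5) ℚ := X 1
/-- `z = ⟨212|222⟩` -/
noncomputable def z : MvPolynomial (Fin 5) ℚ := X 2
/-- `t = ⟨222|222⟩` -/
noncomputable def t : MvPolynomial (Fin 5) ℚ := X 3
/-- `w = w(2)` -/
noncomputable def w : MvPolynomial (Fin 5) ℚ := X 4

/-- The twelve generators of the Turaev--Viro ideal of type (2,1). -/
noncomputable def tvGens : Set (MvPolynomial (Fin 5) ℚ) :=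
  { t^2 - z^3 - w*t^3,
    z^2 - z^2*y - w*t^2*z,
    z*y - w*z^3,
    y*x - w*y^2*x,
    z*x - w*z^2*x,
    y^2 - y*x^2,
    x^2 - y^3 - w*z^3,
    x - w*x^3,
    -(z*y^2) - w*t*z^2,
    t*z - w*t*z^2,
    z^2 - z*x^2,
    z^2 - w*z^2*y }

/-- `x² − y` lies in the radical of the Turaev--Viro ideal of type (2,1). -/
theorem xsq_sub_y_mem_radical : x^2 - y ∈ (Ideal.span tvGens).radical := by
  have hmem : ∀ p ∈ tvGens, p ∈ Ideal.span tvGens := fun p hp => Ideal.subset_span hp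
  have h3 : z*y - w*z^3 ∈ Ideal.span tvGens := hmem _ (by simp [tvGens])
  have h6 : y^2 - y*x^2 ∈ Ideal.span tvGens := hmem _ (by simp [tvGens])
  have h7 : x^2 - y^3 - w*z^3 ∈ Ideal.span tvGens := hmem _ (by simp [tvGens])
  have h9 : -(z*y^2) - w*t*z^2 ∈ Ideal.span tvGens := hmem _ (by simp [tvGens])
  have h10 : t*z - w*t*z^2 ∈ Ideal.span tvGens := hmem _ (by simp [tvGens])
  have h11 : z^2 - z*x^2 ∈ Ideal.span tvGens := hmem _ (by simp [tvGens])
  have h12 : z^2 - w*z^2*y ∈ Ideal.span tvGens := hmem _ (by simp [tvGens])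
  refine ⟨2, ?_⟩
  have key : (x^2 - y)^2 =
      (1 - y^2) * (y^2 - y*x^2) + z * (z^2 - w*z^2*y) + (x^2 - y) * (x^2 - y^3 - w*z^3)
      - w*z^2 * (z^2 - z*x^2) + (t*z - w*t*z^2)
      + (w*z - 1) * ((t*z - w*t*z^2) - (-(z*y^2) - w*t*z^2) - y * (z*y - w*z^3)
          + z * (z^2 - w*z^2*y)) := by
    unfold x y z t w; ring
  rw [key]
  exact Ideal.add_mem _
    (Ideal.add_mem _
      (Ideal.sub_mem _
        (Ideal.add_mem _
          (Ideal.add_mem _ (Ideal.mul_mem_left _ _ h6) (Ideal.mul_mem_left _ _ h12))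
          (Ideal.mul_mem_left _ _ h7))
        (Ideal.mul_mem_left _ _ h11))
      h10)
    (Ideal.mul_mem_left _ _
      (Ideal.add_mem _
        (Ideal.sub_mem _ (Ideal.sub_mem _ h10 h9) (Ideal.mul_mem_left _ _ h3))
        (Ideal.mul_mem_left _ _ h12)))
end

section
/- The Turaev–Viro ideal I ⊆ ℚ[x, y, z, t, w] generated by the twelve polynomials t² − z³ − w·t³; z² − z²·y − w·t²·z; z·y − w·z³; y·x − w·y²·x; z·x − w·z²·x; y² − y·x²; x² − y³ − w·z³; x − w·x³; −z·y² − w·t·z²; t·z − w·t·z²; z² − z·x²; z² − w·z²·y is not a radical ideal; specifically, x² − y ∈ √I but x² − y ∉ I. -/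
open MvPolynomial

/-- The evaluation `x ↦ 0, y ↦ u², z ↦ 0, t ↦ 0, w ↦ 0`. -/
noncomputable def tvPhi : MvPolynomial (Fin 5) ℚ →ₐ[ℚ] Polynomial ℚ :=
  aeval ![0, Polynomial.X ^ 2, 0, 0, 0]

lemma tvPhi_x : tvPhi x = 0 := by simp [tvPhi, x]
lemma tvPhi_y : tvPhi y = Polynomial.X ^ 2 := by simp [tvPhi, y]
lemma tvPhi_z : tvPhi z = 0 := by simp [tvPhi, z]
lemma tvPhi_t : tvPhi t = 0 := by simp [tvPhi, t]
lemma tvPhi_w : tvPhi w = 0 := by simp [tvPhi, w]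

lemma tvGens_not_mem : x^2 - y ∉ Ideal.span tvGens := by
  intro h
  have hmap : tvPhi (x^2 - y) ∈ Ideal.map tvPhi.toRingHom (Ideal.span tvGens) :=
    Ideal.mem_map_of_mem _ h
  rw [Ideal.map_span] at hmap
  have hle : (tvPhi.toRingHom '' tvGens : Set (Polynomial ℚ)) ⊆
      ↑(Ideal.span {(Polynomial.X : Polynomial ℚ) ^ 3}) := by
    rintro p ⟨g, hg, rfl⟩
    have hX3 : ∀ q : Polynomial ℚ, (Polynomial.X : Polynomial ℚ)^3 * q ∈
        Ideal.span {(Polynomial.X : Polynomial ℚ) ^ 3} := fun q =>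
      Ideal.mul_mem_right _ _ (Ideal.subset_span rfl)
    simp only [tvGens, Set.mem_insert_iff, Set.mem_singleton_iff] at hg
    rcases hg with rfl|rfl|rfl|rfl|rfl|rfl|rfl|rfl|rfl|rfl|rfl|rfl <;>
      simp only [AlgHom.toRingHom_eq_coe, RingHom.coe_coe, map_sub, map_add, map_mul,
        map_pow, map_neg, tvPhi_x, tvPhi_y, tvPhi_z, tvPhi_t, tvPhi_w] <;>
      rw [SetLike.mem_coe, Ideal.mem_span_singleton]
    · exact ⟨0, by ring⟩
    · exact ⟨0, by ring⟩
    · exact ⟨0, by ring⟩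
    · exact ⟨0, by ring⟩
    · exact ⟨0, by ring⟩
    · exact ⟨Polynomial.X, by ring⟩
    · exact ⟨-(Polynomial.X^3), by ring⟩
    · exact ⟨0, by ring⟩
    · exact ⟨0, by ring⟩
    · exact ⟨0, by ring⟩
    · exact ⟨0, by ring⟩
    · exact ⟨0, by ring⟩
  have hmem : tvPhi (x^2 - y) ∈ Ideal.span {(Polynomial.X : Polynomial ℚ) ^ 3} :=
    Ideal.span_le.mpr hle hmap
  have heval : tvPhi (x^2 - y) = -(Polynomial.X ^ 2) := by
    simp [map_sub, map_pow, tvPhi_x, tvPhi_y]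
  rw [heval, Ideal.mem_span_singleton] at hmem
  have hdvd : (Polynomial.X : Polynomial ℚ) ^ 3 ∣ Polynomial.X ^ 2 :=
    (dvd_neg.mp hmem)
  have := Polynomial.natDegree_le_of_dvd hdvd (by
    exact pow_ne_zero _ Polynomial.X_ne_zero)
  simp [Polynomial.natDegree_pow] at this

lemma tvGens_sq_mem : (x^2 - y)^2 ∈ Ideal.span tvGens := by
  have hg3 : z*y - w*z^3 ∈ Ideal.span tvGens :=
    Ideal.subset_span (by simp [tvGens])
  have hg6 : y^2 - y*x^2 ∈ Ideal.span tvGens :=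
    Ideal.subset_span (by simp [tvGens])
  have hg7 : x^2 - y^3 - w*z^3 ∈ Ideal.span tvGens :=
    Ideal.subset_span (by simp [tvGens])
  have key : (x^2 - y)^2 =
      (x^2 - y) * (x^2 - y^3 - w*z^3) - (x^2 - y) * (z*y - w*z^3)
        + (1 - y^2 - z) * (y^2 - y*x^2) := by ring
  rw [key]
  exact add_mem (sub_mem (Ideal.mul_mem_left _ _ hg7) (Ideal.mul_mem_left _ _ hg3))
    (Ideal.mul_mem_left _ _ hg6)

/-- The Turaev--Viro ideal of type (2,1) is not radical:
`x² − y ∈ √I` but `x² − y ∉ I`. -/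
theorem tvIdeal_not_radical :
    x^2 - y ∈ (Ideal.span tvGens).radical ∧
    x^2 - y ∉ Ideal.span tvGens ∧
    ¬ (Ideal.span tvGens).IsRadical := by
  refine ⟨⟨2, tvGens_sq_mem⟩, tvGens_not_mem, fun h => tvGens_not_mem ?_⟩
  exact h ⟨2, tvGens_sq_mem⟩
end

section
/- In ℚ[x, y, z, t, w], the ideal J generated by the fourteen polynomials t·z − z·w + 2z; z² − z·w + z; z·y − z·w + z; y² − y·w + z; x² − y; z·w² − z·w − z; y·w² − z·w − y; −x + x·w² + y·x − z·x − w·x; t²·w − z − t; y·x + w·z·x − w·x; w·y·x − x·w² − y·x + z·x + w·x; y·t² − y·t·w + 2z·w − 4z; x·t² − w·x·t + x·w² + 3y·x + z·x − 3w·x − x; t·y·x − w·x·t + y·x + z·x − w·x contains the ideal I generated by the twelve polynomials t² − z³ − w·t³; z² − z²·y − w·t²·z; z·y − w·z³; y·x − w·y²·x; z·x − w·z²·x; y² − y·x²; x² − y³ − w·z³; x − w·x³; −z·y² − w·t·z²; t·z − w·t·z²; z² − z·x²; z² − w·z²·y. -/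
set_option maxHeartbeats 1000000


open MvPolynomial

/-- The fourteen generators of `√I` (the listed Gröbner base of the radical). -/
noncomputable def radGens : Set (MvPolynomial (Fin 5) ℚ) :=
  { t*z - z*w + 2*z,
    z^2 - z*w + z,
    z*y - z*w + z,
    y^2 - y*w + z,
    x^2 - y,
    z*w^2 - z*w - z,
    y*w^2 - z*w - y,
    -x + x*w^2 + y*x - z*x - w*x,
    t^2*w - z - t,
    y*x + w*z*x - w*x,
    w*y*x - x*w^2 - y*x + z*x + w*x,
    y*t^2 - y*t*w + 2*z*w - 4*z,
    x*t^2 - w*x*t + x*w^2 + 3*y*x + z*x - 3*w*x - x,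
    t*y*x - w*x*t + y*x + z*x - w*x }

/-- The ideal generated by the twelve Turaev--Viro relations is contained in the
ideal generated by the fourteen listed radical generators. -/
theorem tvIdeal_le_radIdeal : Ideal.span tvGens ≤ Ideal.span radGens := by
  rw [Ideal.span_le]
  have h0 : (t*z - z*w + 2*z) ∈ Ideal.span radGens := Ideal.subset_span (Set.mem_insert _ _)
  have h1 : (z^2 - z*w + z) ∈ Ideal.span radGens := Ideal.subset_span (Set.mem_insert_of_mem _ (Set.mem_insert _ _))
  have h2 : (z*y - z*w + z) ∈ Ideal.span radGens := Ideal.subset_span (Set.mem_insert_of_mem _ (Set.mem_insert_of_mem _ (Set.mem_insert _ _)))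
  have h3 : (y^2 - y*w + z) ∈ Ideal.span radGens := Ideal.subset_span (Set.mem_insert_of_mem _ (Set.mem_insert_of_mem _ (Set.mem_insert_of_mem _ (Set.mem_insert _ _))))
  have h4 : (x^2 - y) ∈ Ideal.span radGens := Ideal.subset_span (Set.mem_insert_of_mem _ (Set.mem_insert_of_mem _ (Set.mem_insert_of_mem _ (Set.mem_insert_of_mem _ (Set.mem_insert _ _)))))
  have h5 : (z*w^2 - z*w - z) ∈ Ideal.span radGens := Ideal.subset_span (Set.mem_insert_of_mem _ (Set.mem_insert_of_mem _ (Set.mem_insert_of_mem _ (Set.mem_insert_of_mem _ (Set.mem_insert_of_mem _ (Set.mem_insert _ _))))))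
  have h6 : (y*w^2 - z*w - y) ∈ Ideal.span radGens := Ideal.subset_span (Set.mem_insert_of_mem _ (Set.mem_insert_of_mem _ (Set.mem_insert_of_mem _ (Set.mem_insert_of_mem _ (Set.mem_insert_of_mem _ (Set.mem_insert_of_mem _ (Set.mem_insert _ _)))))))
  have h7 : (-x + x*w^2 + y*x - z*x - w*x) ∈ Ideal.span radGens := Ideal.subset_span (Set.mem_insert_of_mem _ (Set.mem_insert_of_mem _ (Set.mem_insert_of_mem _ (Set.mem_insert_of_mem _ (Set.mem_insert_of_mem _ (Set.mem_insert_of_mem _ (Set.mem_insert_of_mem _ (Set.mem_insert _ _))))))))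
  have h8 : (t^2*w - z - t) ∈ Ideal.span radGens := Ideal.subset_span (Set.mem_insert_of_mem _ (Set.mem_insert_of_mem _ (Set.mem_insert_of_mem _ (Set.mem_insert_of_mem _ (Set.mem_insert_of_mem _ (Set.mem_insert_of_mem _ (Set.mem_insert_of_mem _ (Set.mem_insert_of_mem _ (Set.mem_insert _ _)))))))))
  have h9 : (y*x + w*z*x - w*x) ∈ Ideal.span radGens := Ideal.subset_span (Set.mem_insert_of_mem _ (Set.mem_insert_of_mem _ (Set.mem_insert_of_mem _ (Set.mem_insert_of_mem _ (Set.mem_insert_of_mem _ (Set.mem_insert_of_mem _ (Set.mem_insert_of_mem _ (Set.mem_insert_of_mem _ (Set.mem_insert_of_mem _ (Set.mem_insert _ _))))))))))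
  have h10 : (w*y*x - x*w^2 - y*x + z*x + w*x) ∈ Ideal.span radGens := Ideal.subset_span (Set.mem_insert_of_mem _ (Set.mem_insert_of_mem _ (Set.mem_insert_of_mem _ (Set.mem_insert_of_mem _ (Set.mem_insert_of_mem _ (Set.mem_insert_of_mem _ (Set.mem_insert_of_mem _ (Set.mem_insert_of_mem _ (Set.mem_insert_of_mem _ (Set.mem_insert_of_mem _ (Set.mem_insert _ _)))))))))))
  have h11 : (y*t^2 - y*t*w + 2*z*w - 4*z) ∈ Ideal.span radGens := Ideal.subset_span (Set.mem_insert_of_mem _ (Set.mem_insert_of_mem _ (Set.mem_insert_of_mem _ (Set.mem_insert_of_mem _ (Set.mem_insert_of_mem _ (Set.mem_insert_of_mem _ (Set.mem_insert_of_mem _ (Set.mem_insert_of_mem _ (Set.mem_insert_of_mem _ (Set.mem_insert_of_mem _ (Set.mem_insert_of_mem _ (Set.mem_insert _ _))))))))))))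
  have h12 : (x*t^2 - w*x*t + x*w^2 + 3*y*x + z*x - 3*w*x - x) ∈ Ideal.span radGens := Ideal.subset_span (Set.mem_insert_of_mem _ (Set.mem_insert_of_mem _ (Set.mem_insert_of_mem _ (Set.mem_insert_of_mem _ (Set.mem_insert_of_mem _ (Set.mem_insert_of_mem _ (Set.mem_insert_of_mem _ (Set.mem_insert_of_mem _ (Set.mem_insert_of_mem _ (Set.mem_insert_of_mem _ (Set.mem_insert_of_mem _ (Set.mem_insert_of_mem _ (Set.mem_insert _ _)))))))))))))
  have h13 : (t*y*x - w*x*t + y*x + z*x - w*x) ∈ Ideal.span radGens := Ideal.subset_span (Set.mem_insert_of_mem _ (Set.mem_insert_of_mem _ (Set.mem_insert_of_mem _ (Set.mem_insert_of_mem _ (Set.mem_insert_of_mem _ (Set.mem_insert_of_mem _ (Set.mem_insert_of_mem _ (Set.mem_insert_of_mem _ (Set.mem_insert_of_mem _ (Set.mem_insert_of_mem _ (Set.mem_insert_of_mem _ (Set.mem_insert_of_mem _ (Set.mem_insert_of_mem _ (Set.mem_singleton _))))))))))))))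
  intro p hp
  unfold tvGens at hp
  simp only [Set.mem_insert_iff, Set.mem_singleton_iff] at hp
  rcases hp with rfl|rfl|rfl|rfl|rfl|rfl|rfl|rfl|rfl|rfl|rfl|rfl
  · show (t^2 - z^3 - w*t^3) ∈ _
    rw [show (t^2 - z^3 - w*t^3 : MvPolynomial (Fin 5) ℚ) = ((-1))*(t*z - z*w + 2*z) + (1 + (-1)*w + (-1)*z)*(z^2 - z*w + z) + ((-1))*(z*w^2 - z*w - z) + ((-1)*t)*(t^2*w - z - t) from by ring]
    exact (Ideal.add_mem _ (Ideal.add_mem _ (Ideal.add_mem _ (Ideal.mul_mem_left _ _ h0) (Ideal.mul_mem_left _ _ h1)) (Ideal.mul_mem_left _ _ h5)) (Ideal.mul_mem_left _ _ h8))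
  · show (z^2 - z^2*y - w*t^2*z) ∈ _
    rw [show (z^2 - z^2*y - w*t^2*z : MvPolynomial (Fin 5) ℚ) = (2*w + (-1)*w^2 + (-1)*t*w)*(t*z - z*w + 2*z) + (1 + (-1)*y)*(z^2 - z*w + z) + (1 + (-1)*w)*(z*y - z*w + z) + (2 + (-1)*w)*(z*w^2 - z*w - z) from by ring]
    exact (Ideal.add_mem _ (Ideal.add_mem _ (Ideal.add_mem _ (Ideal.mul_mem_left _ _ h0) (Ideal.mul_mem_left _ _ h1)) (Ideal.mul_mem_left _ _ h2)) (Ideal.mul_mem_left _ _ h5))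
  · show (z*y - w*z^3) ∈ _
    rw [show (z*y - w*z^3 : MvPolynomial (Fin 5) ℚ) = (w + (-1)*w^2 + (-1)*z*w)*(z^2 - z*w + z) + (1)*(z*y - z*w + z) + (1 + (-1)*w)*(z*w^2 - z*w - z) from by ring]
    exact (Ideal.add_mem _ (Ideal.add_mem _ (Ideal.mul_mem_left _ _ h1) (Ideal.mul_mem_left _ _ h2)) (Ideal.mul_mem_left _ _ h5))
  · show (y*x - w*y^2*x) ∈ _
    rw [show (y*x - w*y^2*x : MvPolynomial (Fin 5) ℚ) = ((-1)*x*w)*(y^2 - y*w + z) + ((-1)*x)*(y*w^2 - z*w - y) from by ring]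
    exact (Ideal.add_mem _ (Ideal.mul_mem_left _ _ h3) (Ideal.mul_mem_left _ _ h6))
  · show (z*x - w*z^2*x) ∈ _
    rw [show (z*x - w*z^2*x : MvPolynomial (Fin 5) ℚ) = ((-1)*x*w)*(z^2 - z*w + z) + ((-1)*x)*(z*w^2 - z*w - z) from by ring]
    exact (Ideal.add_mem _ (Ideal.mul_mem_left _ _ h1) (Ideal.mul_mem_left _ _ h5))
  · show (y^2 - y*x^2) ∈ _
    rw [show (y^2 - y*x^2 : MvPolynomial (Fin 5) ℚ) = ((-1)*y)*(x^2 - y) from by ring]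
    exact (Ideal.mul_mem_left _ _ h4)
  · show (x^2 - y^3 - w*z^3) ∈ _
    rw [show (x^2 - y^3 - w*z^3 : MvPolynomial (Fin 5) ℚ) = (w + (-1)*w^2 + (-1)*z*w)*(z^2 - z*w + z) + (1)*(z*y - z*w + z) + ((-1)*w + (-1)*y)*(y^2 - y*w + z) + (1)*(x^2 - y) + (1 + (-1)*w)*(z*w^2 - z*w - z) + ((-1))*(y*w^2 - z*w - y) from by ring]
    exact (Ideal.add_mem _ (Ideal.add_mem _ (Ideal.add_mem _ (Ideal.add_mem _ (Ideal.add_mem _ (Ideal.mul_mem_left _ _ h1) (Ideal.mul_mem_left _ _ h2)) (Ideal.mul_mem_left _ _ h3)) (Ideal.mul_mem_left _ _ h4)) (Ideal.mul_mem_left _ _ h5)) (Ideal.mul_mem_left _ _ h6))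
  · show (x - w*x^3) ∈ _
    rw [show (x - w*x^3 : MvPolynomial (Fin 5) ℚ) = ((-1)*x*w)*(x^2 - y) + ((-1))*(-x + x*w^2 + y*x - z*x - w*x) + ((-1))*(w*y*x - x*w^2 - y*x + z*x + w*x) from by ring]
    exact (Ideal.add_mem _ (Ideal.add_mem _ (Ideal.mul_mem_left _ _ h4) (Ideal.mul_mem_left _ _ h7)) (Ideal.mul_mem_left _ _ h10))
  · show (-(z*y^2) - w*t*z^2) ∈ _
    rw [show (-(z*y^2) - w*t*z^2 : MvPolynomial (Fin 5) ℚ) = ((-1)*z*w)*(t*z - z*w + 2*z) + (2*w + (-1)*w^2)*(z^2 - z*w + z) + (1 + (-1)*w + (-1)*y)*(z*y - z*w + z) + (1 + (-1)*w)*(z*w^2 - z*w - z) from by ring]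
    exact (Ideal.add_mem _ (Ideal.add_mem _ (Ideal.add_mem _ (Ideal.mul_mem_left _ _ h0) (Ideal.mul_mem_left _ _ h1)) (Ideal.mul_mem_left _ _ h2)) (Ideal.mul_mem_left _ _ h5))
  · show (t*z - w*t*z^2) ∈ _
    rw [show (t*z - w*t*z^2 : MvPolynomial (Fin 5) ℚ) = (1 + (-1)*z*w)*(t*z - z*w + 2*z) + (2*w + (-1)*w^2)*(z^2 - z*w + z) + (2 + (-1)*w)*(z*w^2 - z*w - z) from by ring]
    exact (Ideal.add_mem _ (Ideal.add_mem _ (Ideal.mul_mem_left _ _ h0) (Ideal.mul_mem_left _ _ h1)) (Ideal.mul_mem_left _ _ h5))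
  · show (z^2 - z*x^2) ∈ _
    rw [show (z^2 - z*x^2 : MvPolynomial (Fin 5) ℚ) = (1)*(z^2 - z*w + z) + ((-1))*(z*y - z*w + z) + ((-1)*z)*(x^2 - y) from by ring]
    exact (Ideal.add_mem _ (Ideal.add_mem _ (Ideal.mul_mem_left _ _ h1) (Ideal.mul_mem_left _ _ h2)) (Ideal.mul_mem_left _ _ h4))
  · show (z^2 - w*z^2*y) ∈ _
    rw [show (z^2 - w*z^2*y : MvPolynomial (Fin 5) ℚ) = (1 + (-1)*y*w)*(z^2 - z*w + z) + (w + (-1)*w^2)*(z*y - z*w + z) + (1 + (-1)*w)*(z*w^2 - z*w - z) from by ring]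
    exact (Ideal.add_mem _ (Ideal.add_mem _ (Ideal.mul_mem_left _ _ h1) (Ideal.mul_mem_left _ _ h2)) (Ideal.mul_mem_left _ _ h5))
end

section
/- Every common zero (x, y, z, t, w) over an algebraically closed field of characteristic 0 of the twelve polynomials t² − z³ − w·t³; z² − z²·y − w·t²·z; z·y − w·z³; y·x − w·y²·x; z·x − w·z²·x; y² − y·x²; x² − y³ − w·z³; x − w·x³; −z·y² − w·t·z²; t·z − w·t·z²; z² − z·x²; z² − w·z²·y satisfies x² = y. -/
/-- Every common zero over an algebraically closed field of characteristic 0 of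
the twelve Turaev--Viro relations of type (2,1) satisfies `x² = y`. -/
theorem xsq_eq_y_on_variety {k : Type*} [Field k] [IsAlgClosed k] [CharZero k]
    (x y z t w : k)
    (h1 : t^2 - z^3 - w*t^3 = 0)
    (h2 : z^2 - z^2*y - w*t^2*z = 0)
    (h3 : z*y - w*z^3 = 0)
    (h4 : y*x - w*y^2*x = 0)
    (h5 : z*x - w*z^2*x = 0)
    (h6 : y^2 - y*x^2 = 0)
    (h7 : x^2 - y^3 - w*z^3 = 0)
    (h8 : x - w*x^3 = 0)
    (h9 : -(z*y^2) - w*t*z^2 = 0)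
    (h10 : t*z - w*t*z^2 = 0)
    (h11 : z^2 - z*x^2 = 0)
    (h12 : z^2 - w*z^2*y = 0) :
    x^2 = y := by
  have hfac : x * (1 - w*x^2) = 0 := by linear_combination h8
  rcases mul_eq_zero.mp hfac with hx | hw0
  · -- x = 0, then y² = 0 so y = 0
    have hy2 : y^2 = 0 := by rw [hx] at h6; linear_combination h6
    have hy : y = 0 := by
      have := pow_eq_zero_iff (n := 2) (by norm_num) |>.mp hy2
      exact this
    rw [hx, hy]; ring
  · have hw : w*x^2 = 1 := by linear_combination -hw0
    have hx0 : x ≠ 0 := by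
      intro h
      rw [h] at hw
      simp at hw
    have e1 : x * 1 = x * (y^2 + z) := by
      linear_combination h8 + w*x*h7 - y*h4 - h5 - w*z*h5 + x*hw0 - x*hw0
    have hz : (1:k) = y^2 + z := mul_left_cancel₀ hx0 e1
    linear_combination h7 - h3 - y*hz
end

section
/- If f, g ∈ R are polynomials and I ⊆ R an ideal such that the normal forms (unique coset representatives) of f·g + I and of (Nf(f))·(Nf(g)) + I agree for all f, g precisely when multiplication descends, then: in ℚ[x, y, z, t, w] with the ideal I generated by the twelve Turaev–Viro relations of type (2,1), the element (w³t² + 2z² − zt + 1)² is NOT congruent modulo I to w³t² + 3y² + 7z² − 6tz + 1. Equivalently, the polynomial (w³t² + 2z² − zt + 1)² − (w³t² + 3y² + 7z² − 6tz + 1) does not lie in I. -/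
open MvPolynomial

/-- Non-multiplicativity under connected sum: the square of the normal form of
`TV(L(8,3))` is not congruent mod the Turaev--Viro ideal to the normal form of
`TV(L(8,3) # L(8,3))`. -/
theorem tv_not_multiplicative :
    (w^3*t^2 + 2*z^2 - z*t + 1)^2 - (w^3*t^2 + 3*y^2 + 7*z^2 - 6*t*z + 1)
      ∉ Ideal.span tvGens := by
  intro h
  have hle : Ideal.span tvGens ≤ RingHom.ker (eval (![0,0,0,1,1] : Fin 5 → ℚ)) := by
    rw [Ideal.span_le]
    intro p hp
    simp only [tvGens, Set.mem_insert_iff, Set.mem_singleton_iff] at hp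
    rcases hp with h|h|h|h|h|h|h|h|h|h|h|h <;>
      subst h <;>
      simp [RingHom.mem_ker, x, y, z, t, w]
  have := hle h
  simp [RingHom.mem_ker, x, y, z, t, w] at this
  norm_num at this
end

section
/- The polynomials p₁ = w³t² + 2z² − zt + 1 (normal form for L(8,3)) and p₂ = w³t² − z² + tz + 1 (normal form for L(7,2)) are distinct modulo the Turaev–Viro ideal I of type (2,1); i.e., p₁ − p₂ = 3z² − 2zt ∉ I, where I ⊆ ℚ[x,y,z,t,w] is generated by t² − z³ − w·t³; z² − z²·y − w·t²·z; z·y − w·z³; y·x − w·y²·x; z·x − w·z²·x; y² − y·x²; x² − y³ − w·z³; x − w·x³; −z·y² − w·t·z²; t·z − w·t·z²; z² − z·x²; z² − w·z²·y. -/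
open MvPolynomial

/-- The normal forms for `L(8,3)` and `L(7,2)` differ mod the Turaev--Viro ideal:
their difference `3z² − 2zt` is not in the ideal. -/
theorem tv_distinguishes_L83_L72 :
    (w^3*t^2 + 2*z^2 - z*t + 1) - (w^3*t^2 - z^2 + t*z + 1) = 3*z^2 - 2*z*t ∧
    3*z^2 - 2*z*t ∉ Ideal.span tvGens := by
  refine ⟨by ring, ?_⟩
  intro hmem
  -- evaluate at the golden-ratio point
  set r : ℝ := (Real.sqrt 5 - 1) / 2 with hr_def
  have h5 : (Real.sqrt 5) ^ 2 = 5 := Real.sq_sqrt (by norm_num)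
  have hr : r ^ 2 = 1 - r := by
    rw [hr_def]; nlinarith [h5]
  have hrpos : 0 < r := by
    have : (2:ℝ) < Real.sqrt 5 := by
      nlinarith [h5, Real.sqrt_nonneg 5]
    rw [hr_def]; linarith
  set s : ℝ := Real.sqrt r with hs_def
  have hs : s ^ 2 = r := Real.sq_sqrt hrpos.le
  set f : Fin 5 → ℝ := ![s, r, r, -r^2, r+1] with hf
  have hgen : ∀ p ∈ tvGens, (aeval f) p = 0 := by
    intro p hp
    simp only [tvGens, Set.mem_insert_iff, Set.mem_singleton_iff] at hp
    rcases hp with rfl|rfl|rfl|rfl|rfl|rfl|rfl|rfl|rfl|rfl|rfl|rfl <;>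
      simp only [x, y, z, t, w, map_sub, map_add, map_mul, map_pow, map_neg, aeval_X, hf,
        Matrix.cons_val_zero, Matrix.cons_val_one, Matrix.head_cons, Matrix.cons_val_two,
        Matrix.tail_cons, Matrix.cons_val_three, Matrix.cons_val_four, Matrix.cons_val_fin_one]
    · linear_combination (r^3 + r^5) * hr
    · linear_combination (-r^2 - r^4) * hr
    · linear_combination (-r^2) * hr
    · linear_combination (-r*s) * hr
    · linear_combination (-r*s) * hr
    · linear_combination (-r) * hs
    · linear_combination hs + (-r - r^2) * hr
    · linear_combination (-s - r*s) * hs + (-s) * hr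
    · linear_combination (r^3) * hr
    · linear_combination (r^3) * hr
    · linear_combination (-r) * hs
    · linear_combination (-r^2) * hr
  have hle : Ideal.span tvGens ≤ RingHom.ker ((aeval f : MvPolynomial (Fin 5) ℚ →ₐ[ℚ] ℝ) : MvPolynomial (Fin 5) ℚ →+* ℝ) :=
    Ideal.span_le.mpr fun p hp => hgen p hp
  have h0 : (aeval f) (3*z^2 - 2*z*t) = 0 := hle hmem
  have : (aeval f) (3*z^2 - 2*z*t) = 3*r^2 + 2*r^3 := by
    simp only [z, t, map_sub, map_mul, map_pow, aeval_X, hf, map_ofNat,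
      Matrix.cons_val_two, Matrix.tail_cons, Matrix.head_cons, Matrix.cons_val_three]
    ring
  rw [this] at h0
  nlinarith [hrpos, sq_nonneg r]
end

section
/- Let ε be the positive root of ε² = ε + 1 (the golden ratio) and let a be a real square root of ε^{-1}. Then the point (x, y, z, t, w) = (a, ε^{-1}, ε^{-1}, −ε^{-2}, ε) ∈ ℝ⁵ is a common zero of all twelve polynomials t² − z³ − w·t³; z² − z²·y − w·t²·z; z·y − w·z³; y·x − w·y²·x; z·x − w·z²·x; y² − y·x²; x² − y³ − w·z³; x − w·x³; −z·y² − w·t·z²; t·z − w·t·z²; z² − z·x²; z² − w·z²·y, and at this point the polynomial 3z² − 2zt evaluates to 3ε^{-2} + 2ε^{-3} ≠ 0. -/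
/-- The golden-ratio evaluation point is a common zero of the twelve
Turaev--Viro relations of type (2,1), and at it `3z² − 2zt = 3ε⁻² + 2ε⁻³ ≠ 0`. -/
theorem golden_ratio_point_certificate (ε a x y z t w : ℝ)
    (hε : ε = (1 + Real.sqrt 5) / 2) (ha : a = Real.sqrt ε⁻¹)
    (hx : x = a) (hy : y = ε⁻¹) (hz : z = ε⁻¹)
    (ht : t = -((ε^2)⁻¹)) (hw : w = ε) :
    (t^2 - z^3 - w*t^3 = 0 ∧
     z^2 - z^2*y - w*t^2*z = 0 ∧
     z*y - w*z^3 = 0 ∧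
     y*x - w*y^2*x = 0 ∧
     z*x - w*z^2*x = 0 ∧
     y^2 - y*x^2 = 0 ∧
     x^2 - y^3 - w*z^3 = 0 ∧
     x - w*x^3 = 0 ∧
     -(z*y^2) - w*t*z^2 = 0 ∧
     t*z - w*t*z^2 = 0 ∧
     z^2 - z*x^2 = 0 ∧
     z^2 - w*z^2*y = 0) ∧
    3*z^2 - 2*z*t = 3*(ε^2)⁻¹ + 2*(ε^3)⁻¹ ∧
    3*(ε^2)⁻¹ + 2*(ε^3)⁻¹ ≠ 0 := by
  have h5 : Real.sqrt 5 ^ 2 = 5 := Real.sq_sqrt (by norm_num)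
  have hs5 : (1:ℝ) < Real.sqrt 5 := by nlinarith [Real.sqrt_nonneg 5]
  have hεpos : 0 < ε := by rw [hε]; linarith
  have hεne : ε ≠ 0 := ne_of_gt hεpos
  have hε2 : ε ^ 2 = ε + 1 := by rw [hε]; field_simp; nlinarith
  have ha2 : a ^ 2 = ε⁻¹ := by
    rw [ha]; exact Real.sq_sqrt (inv_nonneg.mpr hεpos.le)
  subst hx hy hz ht hw
  -- now the golden ratio is named `w` and `a` is named `x`
  have hi : w⁻¹ = w - 1 := by
    field_simp
    linear_combination -hε2
  have hi2 : (w^2)⁻¹ = (w - 1)^2 := by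
    rw [← inv_pow, hi]
  have hi3 : (w^3)⁻¹ = (w - 1)^3 := by
    rw [← inv_pow, hi]
  have hx2 : x ^ 2 = w - 1 := by rw [ha2, hi]
  rw [hi, hi2, hi3]
  refine ⟨⟨?_, ?_, ?_, ?_, ?_, ?_, ?_, ?_, ?_, ?_, ?_, ?_⟩, by ring, ?_⟩
  · linear_combination (-2 + 8*w - 13*w^2 + 11*w^3 - 5*w^4 + w^5) * hε2
  · linear_combination (-2 + 6*w - 7*w^2 + 4*w^3 - w^4) * hε2
  · linear_combination (-1 + 2*w - w^2) * hε2
  · linear_combination (x - w*x) * hε2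
  · linear_combination (x - w*x) * hε2
  · linear_combination (1 - w) * hx2
  · linear_combination (w - w^2) * hε2 + hx2
  · linear_combination (-x) * hε2 + (-(w*x)) * hx2
  · linear_combination (-1 + 3*w - 3*w^2 + w^3) * hε2
  · linear_combination (-1 + 3*w - 3*w^2 + w^3) * hε2
  · linear_combination (1 - w) * hx2
  · linear_combination (-1 + 2*w - w^2) * hε2
  · have hw1 : (1:ℝ) < w := by rw [hε]; linarith
    have hpos : 0 < 3*(w - 1)^2 + 2*(w - 1)^3 := by nlinarith
    exact hpos.ne'
end
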